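/- Let G be a finite simple graph, k ≥ 3, and L a k-list assignment of G. Let B ⊆ G be a bug with root r, where the degree of r in G is at most k and the number of edges from r to G − B is strictly less than |B| ≤ k. If B has a hidden vertex, then B is safe in G. -/

import Mathlib

open SimpleGraph

variable {V : Type*}

/-- `n mod* k`: the unique `m ∈ {1,…,k}` with `n ≡ m (mod k)`. -/
def modStar (n k : ℕ) : ℕ := if n % k = 0 then k else n % k

/-- The degree of vertex `v` in `G`. -/
noncomputable def deg (G : SimpleGraph V) (v : V) : ℕ := Set.ncard {u | G.Adj v u}

/-- The number of edges of the induced subgraph `G[A]`. -/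
noncomputable def edgesWithin (G : SimpleGraph V) (A : Finset V) : ℕ :=
  Set.ncard {e : Sym2 V | e ∈ G.edgeSet ∧ ∀ v ∈ e, v ∈ A}

/-- The number of vertices of degree 1 in `G`. -/
noncomputable def V1count (G : SimpleGraph V) : ℕ := Set.ncard {v | deg G v = 1}

/-- `f` is a strongly equitable (SE) `L`-coloring of the induced subgraph `G[W]`:
a proper coloring from the lists in which every color class has at most
`⌈|W|/k⌉` vertices and at most `|W| mod* k` color classes are full. -/
def IsSEColoringOn [Fintype V] [DecidableEq V] (G : SimpleGraph V) (k : ℕ)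
    (L : V → Finset ℕ) (W : Finset V) (f : V → ℕ) : Prop :=
  (∀ v ∈ W, f v ∈ L v) ∧
  (∀ u ∈ W, ∀ v ∈ W, G.Adj u v → f u ≠ f v) ∧
  (∀ c : ℕ, (W.filter fun v => f v = c).card ≤ (W.card + k - 1) / k) ∧
  ((W.image f).filter fun c => (W.filter fun v => f v = c).card = (W.card + k - 1) / k).card
    ≤ modStar W.card k

/-- `G` is strongly equitably `k`-choosable. -/
def SEChoosable [Fintype V] [DecidableEq V] (G : SimpleGraph V) (k : ℕ) : Prop :=
  ∀ L : V → Finset ℕ, (∀ v, (L v).card = k) → ∃ f : V → ℕ, IsSEColoringOn G k L Finset.univ f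

/-- `S` is safe in `G[U]` (w.r.t. the `k`-list assignment `L`): every SE `L`-coloring of
`G[U] − S` extends to an SE `L`-coloring of `G[U]`. -/
def SafeIn [Fintype V] [DecidableEq V] (G : SimpleGraph V) (k : ℕ)
    (L : V → Finset ℕ) (U S : Finset V) : Prop :=
  ∀ f : V → ℕ, IsSEColoringOn G k L (U \ S) f →
    ∃ g : V → ℕ, (∀ v ∈ U \ S, g v = f v) ∧ IsSEColoringOn G k L U g

/-- The potential `ρ_G^k(A)` (for `k ∈ {3,4}`). -/
noncomputable def rhoA (G : SimpleGraph V) (k : ℕ) (A : Finset V) : ℤ :=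
  (if k = 3 then 6 else 4) * (edgesWithin G A : ℤ) - (if k = 3 then 7 else 5) * (A.card : ℤ)
    + (if k = 3 then 3 else 2) * (Set.ncard {v | v ∈ A ∧ deg G v = 1} : ℤ)

/-- `ρ_G^k`: the maximum of `ρ_G^k(A)` over all `A ⊆ V(G)`. -/
noncomputable def rhoMax [Fintype V] [DecidableEq V] (G : SimpleGraph V) (k : ℕ) : ℤ :=
  ((Finset.univ : Finset (Finset V)).image (rhoA G k)).max'
    (Finset.image_nonempty.mpr ⟨∅, Finset.mem_univ ∅⟩)

/-- `σ_G^k`: `|V_1(G)| mod 2` if `k = 4`, and `0` if `k = 3`. -/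
noncomputable def sigmaK (G : SimpleGraph V) (k : ℕ) : ℤ :=
  if k = 4 then ((V1count G % 2 : ℕ) : ℤ) else 0

/-- `(G, L)` is a minimal counterexample for `k`: `L` is a `k`-list assignment,
`ρ_G^k ≤ 2 − σ_G^k`, `G` has no SE `L`-coloring, and every smaller graph (measured by
`|H| + |V_1(H)|`) satisfying the potential condition is SE colorable from every
`k`-list assignment. -/
def MinCounterexample [Fintype V] [DecidableEq V] (G : SimpleGraph V) (k : ℕ)
    (L : V → Finset ℕ) : Prop :=
  (∀ v, (L v).card = k) ∧
  rhoMax G k ≤ 2 - sigmaK G k ∧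
  (¬ ∃ f : V → ℕ, IsSEColoringOn G k L Finset.univ f) ∧
  ∀ (m : ℕ) (H : SimpleGraph (Fin m)) (L' : Fin m → Finset ℕ),
    (∀ v, (L' v).card = k) →
    rhoMax H k ≤ 2 - sigmaK H k →
    m + V1count H < Fintype.card V + V1count G →
    ∃ f : Fin m → ℕ, IsSEColoringOn H k L' Finset.univ f

/-- `B` is a bug in `G` with root `r`: a connected induced subgraph in which every
vertex other than possibly `r` has degree at most 2 in `G`. -/
def IsBug (G : SimpleGraph V) (B : Finset V) (r : V) : Prop :=
  r ∈ B ∧ (G.induce (↑B : Set V)).Connected ∧ ∀ v ∈ B, v ≠ r → deg G v ≤ 2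

/-- The closed neighborhood `N[B]`. -/
def closedNbhd (G : SimpleGraph V) (B : Finset V) : Set V :=
  {v | v ∈ B ∨ ∃ u ∈ B, G.Adj u v}

/-- `λ_B`: the number of plain 2-threads `P` with `r ∈ P ⊆ N[B]`; such a thread
`s x y a` is recorded by its middle edge `s(x, y)`. -/
noncomputable def lambdaB (G : SimpleGraph V) (B : Finset V) (r : V) : ℕ :=
  Set.ncard {e : Sym2 V | ∃ s x y a : V, e = s(x, y) ∧
    3 ≤ deg G s ∧ deg G x ≤ 2 ∧ deg G y ≤ 2 ∧ 3 ≤ deg G a ∧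
    G.Adj s x ∧ G.Adj x y ∧ G.Adj y a ∧ s ≠ a ∧
    r ∈ ({s, x, y, a} : Set V) ∧
    s ∈ closedNbhd G B ∧ x ∈ closedNbhd G B ∧ y ∈ closedNbhd G B ∧ a ∈ closedNbhd G B}

/-- `v` is a body vertex for root `r`: `v ≠ r` and `v` lies on a loose or closed
thread ending at `r`. -/
def IsBodyVertex (G : SimpleGraph V) (r v : V) : Prop :=
  v ≠ r ∧ 3 ≤ deg G r ∧
    ((∃ (a : V) (P : G.Walk r a), P.IsPath ∧ deg G a = 1 ∧
        (∀ u ∈ P.support, u ≠ r → u ≠ a → deg G u ≤ 2) ∧ v ∈ P.support) ∨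
     (∃ P : G.Walk r r, P.IsCycle ∧
        (∀ u ∈ P.support, u ≠ r → deg G u ≤ 2) ∧ v ∈ P.support))

/-- `π_B`: the number of body vertices in `B`. -/
noncomputable def piB (G : SimpleGraph V) (B : Finset V) (r : V) : ℕ :=
  Set.ncard {v | v ∈ B ∧ IsBodyVertex G r v}

/-- A wishbone: a bug `B` with root `r ∈ V_k(G)`, `d_B(r) = d_G(r)`, `|B| = k+1`,
`λ_B = 0` and `π_B = 2`. -/
def IsWishbone [Fintype V] (G : SimpleGraph V) (k : ℕ) (B : Finset V) (r : V) : Prop :=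
  IsBug G B r ∧ deg G r = k ∧ (∀ u, G.Adj r u → u ∈ B) ∧
    B.card = k + 1 ∧ lambdaB G B r = 0 ∧ piB G B r = 2

/-- A jellyfish: a bug `B` with root `r ∈ V_k(G)`, `d_B(r) = d_G(r)`, `|B| = k+1`,
`λ_B = 0` and `π_B = 1`. -/
def IsJellyfish [Fintype V] (G : SimpleGraph V) (k : ℕ) (B : Finset V) (r : V) : Prop :=
  IsBug G B r ∧ deg G r = k ∧ (∀ u, G.Adj r u → u ∈ B) ∧
    B.card = k + 1 ∧ lambdaB G B r = 0 ∧ piB G B r = 1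

/-- `B` is a maximal bug with root `r`. -/
def IsMaximalBug (G : SimpleGraph V) (B : Finset V) (r : V) : Prop :=
  IsBug G B r ∧ ∀ B' : Finset V, IsBug G B' r → B ⊆ B' → B' = B

/-- A fork: a maximal bug `B = B(r)` with root `r` of degree `k−1` or `k`,
`|B| = d(r) + 2`, `λ_B = 1` and `π_B = 0`. -/
def IsFork (G : SimpleGraph V) (k : ℕ) (B : Finset V) (r : V) : Prop :=
  IsMaximalBug G B r ∧ (deg G r = k - 1 ∨ deg G r = k) ∧
    B.card = deg G r + 2 ∧ lambdaB G B r = 1 ∧ piB G B r = 0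

/-- `X`: the union of all extreme sets of `G` (w.r.t. `ρ_G^k`). -/
noncomputable def extremeUnion [Fintype V] [DecidableEq V] (G : SimpleGraph V) (k : ℕ) : Set V :=
  {v | ∃ A : Finset V, A.Nonempty ∧ rhoA G k A = rhoMax G k ∧ v ∈ A}

/-- `G` has an equitable `k`-coloring: a proper coloring with `k` colors in which the
sizes of any two color classes differ by at most 1. -/
def HasEquitableColoring [Fintype V] [DecidableEq V] (G : SimpleGraph V) (k : ℕ) : Prop :=
  ∃ f : V → Fin k, (∀ ⦃u v⦄, G.Adj u v → f u ≠ f v) ∧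
    ∀ c₁ c₂ : Fin k,
      (Finset.univ.filter fun v => f v = c₁).card ≤ (Finset.univ.filter fun v => f v = c₂).card + 1

section Stmt8Aux

lemma stmt8aux_modStar_pos (n k : ℕ) (hk : 1 ≤ k) : 1 ≤ modStar n k := by
  unfold modStar; split
  · exact hk
  · omega

lemma stmt8aux_modStar_le (n k : ℕ) (hk : 1 ≤ k) : modStar n k ≤ k := by
  unfold modStar; split
  · exact le_rfl
  · exact le_of_lt (Nat.mod_lt _ hk)

lemma stmt8aux_modStar_self (b k : ℕ) (hb1 : 1 ≤ b) (hbk : b ≤ k) : modStar b k = b := by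
  unfold modStar
  rcases eq_or_lt_of_le hbk with h | h
  · subst h; simp [Nat.mod_self]
  · rw [Nat.mod_eq_of_lt h, if_neg (by omega : ¬ b = 0)]

lemma stmt8aux_num_main (k b n' : ℕ) (hk : 1 ≤ k) (hb1 : 1 ≤ b) (hbk : b ≤ k) :
    modStar n' k + b ≤ k + modStar (n' + b) k ∧
    ((n' + b + k - 1) / k = (n' + k - 1) / k → modStar n' k + b ≤ modStar (n' + b) k) ∧
    (n' + b + k - 1) / k ≤ (n' + k - 1) / k + 1 := by
  have hk0 : 0 < k := hk
  obtain ⟨q, ρ, hρ, hd⟩ : ∃ q ρ, ρ < k ∧ n' = k * q + ρ :=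
    ⟨n' / k, n' % k, Nat.mod_lt _ hk0, (Nat.div_add_mod n' k).symm⟩
  subst hd
  -- general div helper
  have hdiv : ∀ x : ℕ, (k * q + x) / k = q + x / k := fun x => Nat.mul_add_div hk0 q x
  have hmod : ∀ x : ℕ, (k * q + x) % k = x % k := fun x => Nat.mul_add_mod k q x
  -- compute (n' + k - 1)/k
  have e1 : k * q + ρ + k - 1 = k * q + (ρ + k - 1) := by omega
  have dA : (k * q + ρ + k - 1) / k = q + (ρ + k - 1) / k := by rw [e1, hdiv]
  have e2 : k * q + ρ + b + k - 1 = k * q + (ρ + b + k - 1) := by omega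
  have dB : (k * q + ρ + b + k - 1) / k = q + (ρ + b + k - 1) / k := by rw [e2, hdiv]
  have e3 : k * q + ρ + b = k * q + (ρ + b) := by omega
  have dC : (k * q + ρ + b) % k = (ρ + b) % k := by rw [e3, hmod]
  have msn' : modStar (k * q + ρ) k = if ρ = 0 then k else ρ := by
    unfold modStar; rw [hmod ρ, Nat.mod_eq_of_lt hρ]
  have msnb : modStar (k * q + ρ + b) k = if (ρ + b) % k = 0 then k else (ρ + b) % k := by
    unfold modStar; rw [dC]
  -- small div facts
  have div1 : ∀ d : ℕ, d < k → (d + k) / k = 1 := by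
    intro d hd2
    rw [Nat.add_div_right _ hk0, Nat.div_eq_of_lt hd2]
  have div2 : ∀ d : ℕ, d < k → (d + k + k) / k = 2 := by
    intro d hd2
    rw [Nat.add_div_right _ hk0, Nat.add_div_right _ hk0, Nat.div_eq_of_lt hd2]
  have mod1 : ∀ d : ℕ, d < k → (d + k) % k = d := by
    intro d hd2
    rw [Nat.add_mod_right, Nat.mod_eq_of_lt hd2]
  by_cases h0 : ρ = 0
  · -- ρ = 0
    have vA : (k * q + ρ + k - 1) / k = q := by
      rw [dA, Nat.div_eq_of_lt (by omega)]; omega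
    have vB : (k * q + ρ + b + k - 1) / k = q + 1 := by
      rw [dB]; have h5 : ρ + b + k - 1 = (b - 1) + k := by omega
      rw [h5, div1 _ (by omega)]
    rw [msn', msnb, if_pos h0]
    by_cases hbe : b = k
    · have vC : (ρ + b) % k = 0 := by
        have h4 : ρ + b = k := by omega
        rw [h4, Nat.mod_self]
      rw [vC, if_pos rfl]
      exact ⟨by omega, fun h => by omega, by omega⟩
    · have vC : (ρ + b) % k = b := by
        rw [Nat.mod_eq_of_lt (by omega)]; omega
      rw [vC, if_neg (by omega : ¬ b = 0)]
      exact ⟨by omega, fun h => by omega, by omega⟩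
  · -- ρ ≥ 1
    have vA : (k * q + ρ + k - 1) / k = q + 1 := by
      rw [dA]; have h5 : ρ + k - 1 = (ρ - 1) + k := by omega
      rw [h5, div1 _ (by omega)]
    rw [msn', if_neg h0, msnb]
    by_cases h1 : ρ + b < k
    · have vB : (k * q + ρ + b + k - 1) / k = q + 1 := by
        rw [dB]; have h5 : ρ + b + k - 1 = (ρ + b - 1) + k := by omega
        rw [h5, div1 _ (by omega)]
      have vC : (ρ + b) % k = ρ + b := Nat.mod_eq_of_lt h1
      rw [vC, if_neg (by omega : ¬ ρ + b = 0)]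
      exact ⟨by omega, fun _ => by omega, by omega⟩
    · push_neg at h1
      rcases eq_or_lt_of_le h1 with h2 | h2
      · -- ρ + b = k
        have vB : (k * q + ρ + b + k - 1) / k = q + 1 := by
          rw [dB]; have h5 : ρ + b + k - 1 = (k - 1) + k := by omega
          rw [h5, div1 _ (by omega)]
        have vC : (ρ + b) % k = 0 := by rw [← h2, Nat.mod_self]
        rw [vC, if_pos rfl]
        exact ⟨by omega, fun _ => by omega, by omega⟩
      · -- ρ + b > k
        have vB : (k * q + ρ + b + k - 1) / k = q + 2 := by
          rw [dB]; have h5 : ρ + b + k - 1 = (ρ + b - k - 1) + k + k := by omega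
          rw [h5, div2 _ (by omega)]
        have vC : (ρ + b) % k = ρ + b - k := by
          have h4 : ρ + b = (ρ + b - k) + k := by omega
          conv_lhs => rw [h4]
          rw [mod1 _ (by omega)]
        rw [vC, if_neg (by omega : ¬ ρ + b - k = 0)]
        exact ⟨by omega, fun hh => by omega, by omega⟩


lemma stmt8aux_greedy {V : Type*} [DecidableEq V] (k t b : ℕ) (A : V → Finset ℕ) (F : Finset ℕ)
    (ht : 1 ≤ t) (hφ : F.card + b ≤ k + t) (hbk : b ≤ k) :
    ∀ (rem : List V) (chosen : Finset ℕ), rem.Nodup →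
      (∀ v l', (v :: l') <:+ rem → k + 1 ≤ (A v).card + (v :: l').length) →
      chosen.card + rem.length = b →
      (chosen ∩ F).card ≤ t →
      (F.card + b ≤ k → chosen ∩ F = ∅) →
      ∃ c : V → ℕ,
        (∀ v ∈ rem, c v ∈ A v) ∧
        (∀ v ∈ rem, c v ∉ chosen) ∧
        (∀ v ∈ rem, ∀ w ∈ rem, v ≠ w → c v ≠ c w) ∧
        ((chosen ∪ (rem.map c).toFinset) ∩ F).card ≤ t ∧
        (F.card + b ≤ k → ∀ v ∈ rem, c v ∉ F) := by
  intro rem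
  induction rem with
  | nil =>
    intro chosen _ _ _ hfl _
    exact ⟨fun _ => 0, by simp, by simp, by simp, by simpa using hfl, by simp⟩
  | cons v rem ih =>
    intro chosen hnd hsuf hlen hfl hcaseA
    have hvrem : v ∉ rem := (List.nodup_cons.mp hnd).1
    have hndrem : rem.Nodup := (List.nodup_cons.mp hnd).2
    have hnev : ∀ w ∈ rem, w ≠ v := fun w hw he => hvrem (he ▸ hw)
    have hAv : k + 1 ≤ (A v).card + (rem.length + 1) := by
      have := hsuf v rem (List.suffix_refl _)
      simpa using this
    have hlen' : chosen.card + rem.length + 1 = b := by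
      simpa [Nat.add_assoc] using hlen
    have hchos : chosen.card < (A v).card := by
      have h1 : (A v).card ≤ (A v \ chosen).card + chosen.card := by
        calc (A v).card ≤ ((A v) ∪ chosen).card := Finset.card_le_card Finset.subset_union_left
        _ = (A v \ chosen).card + chosen.card := (Finset.card_sdiff_add_card _ _).symm
      omega
    have hsuf' : ∀ w l', (w :: l') <:+ rem → k + 1 ≤ (A w).card + (w :: l').length := by
      intro w l' h
      exact hsuf w l' (h.trans (List.suffix_cons v rem))
    have hfeas : (A v \ chosen).Nonempty := by
      rw [← Finset.card_pos]
      have h1 : (A v).card ≤ (A v \ chosen).card + chosen.card := by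
        calc (A v).card ≤ ((A v) ∪ chosen).card := Finset.card_le_card Finset.subset_union_left
        _ = (A v \ chosen).card + chosen.card := (Finset.card_sdiff_add_card _ _).symm
      omega
    by_cases hforce : (A v \ (F ∪ chosen)).Nonempty
    · obtain ⟨x, hx⟩ := hforce
      rw [Finset.mem_sdiff, Finset.mem_union] at hx
      obtain ⟨hxA, hxFC⟩ := hx
      push_neg at hxFC
      obtain ⟨hxF, hxC⟩ := hxFC
      have hins : (insert x chosen) ∩ F = chosen ∩ F :=
        Finset.insert_inter_of_notMem hxF
      obtain ⟨c, hc1, hc2, hc3, hc4, hc5⟩ := ih (insert x chosen) hndrem hsuf'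
        (by rw [Finset.card_insert_of_notMem hxC]; omega)
        (by rw [hins]; exact hfl)
        (by intro h; rw [hins]; exact hcaseA h)
      refine ⟨Function.update c v x, ?_, ?_, ?_, ?_, ?_⟩
      · intro w hw
        rcases List.mem_cons.mp hw with h | h
        · subst h; rw [Function.update_self]; exact hxA
        · rw [Function.update_of_ne (hnev _ h)]; exact hc1 w h
      · intro w hw
        rcases List.mem_cons.mp hw with h | h
        · subst h; rw [Function.update_self]; exact hxC
        · rw [Function.update_of_ne (hnev _ h)]
          intro hmem
          exact hc2 w h (Finset.mem_insert_of_mem hmem)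
      · intro w hw w' hw' hne
        rcases List.mem_cons.mp hw with h | h <;> rcases List.mem_cons.mp hw' with h' | h'
        · exact absurd (h.trans h'.symm) hne
        · subst h
          rw [Function.update_self, Function.update_of_ne (hnev _ h')]
          intro he
          exact hc2 w' h' (he ▸ Finset.mem_insert_self x chosen)
        · subst h'
          rw [Function.update_self, Function.update_of_ne (hnev _ h)]
          intro he
          exact hc2 w h (he ▸ Finset.mem_insert_self x chosen)
        · rw [Function.update_of_ne (hnev _ h),
            Function.update_of_ne (hnev _ h')]
          exact hc3 w h w' h' hne
      · have hmapeq : rem.map (Function.update c v x) = rem.map c :=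
          List.map_congr_left (fun w hw => Function.update_of_ne (hnev w hw) _ _)
        have hseteq : chosen ∪ ((v :: rem).map (Function.update c v x)).toFinset
            = (insert x chosen) ∪ (rem.map c).toFinset := by
          rw [List.map_cons, hmapeq, Function.update_self]
          ext a
          simp only [List.mem_toFinset, List.toFinset_cons, Finset.mem_insert,
            Finset.mem_union, Finset.mem_insert]
          tauto
        rw [hseteq]
        exact hc4
      · intro h w hw
        rcases List.mem_cons.mp hw with h' | h'
        · subst h'; rw [Function.update_self]; exact hxF
        · rw [Function.update_of_ne (hnev _ h')]; exact hc5 h w h'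
    · obtain ⟨x, hx⟩ := hfeas
      rw [Finset.mem_sdiff] at hx
      obtain ⟨hxA, hxC⟩ := hx
      have hsubset : A v ⊆ F ∪ chosen := by
        intro a ha
        by_contra h'
        exact hforce ⟨a, Finset.mem_sdiff.mpr ⟨ha, h'⟩⟩
      have hxF : x ∈ F := by
        rcases Finset.mem_union.mp (hsubset hxA) with h | h
        · exact h
        · exact absurd h hxC
      have hcard : (A v).card + (chosen ∩ F).card ≤ F.card + chosen.card := by
        have h1 : (A v).card ≤ (F ∪ chosen).card := Finset.card_le_card hsubset
        have h2 := Finset.card_union_add_card_inter F chosen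
        have h3 : (chosen ∩ F).card = (F ∩ chosen).card := by rw [Finset.inter_comm]
        omega
      have hflnew : (chosen ∩ F).card + 1 ≤ t := by omega
      have hcontr : ¬ (F.card + b ≤ k) := by omega
      have hins : (insert x chosen) ∩ F = insert x (chosen ∩ F) :=
        Finset.insert_inter_of_mem hxF
      have hinscard : ((insert x chosen) ∩ F).card = (chosen ∩ F).card + 1 := by
        rw [hins, Finset.card_insert_of_notMem (fun hm => hxC (Finset.mem_inter.mp hm).1)]
      obtain ⟨c, hc1, hc2, hc3, hc4, hc5⟩ := ih (insert x chosen) hndrem hsuf'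
        (by rw [Finset.card_insert_of_notMem hxC]; omega)
        (by rw [hinscard]; exact hflnew)
        (fun h => absurd h hcontr)
      refine ⟨Function.update c v x, ?_, ?_, ?_, ?_, ?_⟩
      · intro w hw
        rcases List.mem_cons.mp hw with h | h
        · subst h; rw [Function.update_self]; exact hxA
        · rw [Function.update_of_ne (hnev _ h)]; exact hc1 w h
      · intro w hw
        rcases List.mem_cons.mp hw with h | h
        · subst h; rw [Function.update_self]; exact hxC
        · rw [Function.update_of_ne (hnev _ h)]
          intro hmem
          exact hc2 w h (Finset.mem_insert_of_mem hmem)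
      · intro w hw w' hw' hne
        rcases List.mem_cons.mp hw with h | h <;> rcases List.mem_cons.mp hw' with h' | h'
        · exact absurd (h.trans h'.symm) hne
        · subst h
          rw [Function.update_self, Function.update_of_ne (hnev _ h')]
          intro he
          exact hc2 w' h' (he ▸ Finset.mem_insert_self x chosen)
        · subst h'
          rw [Function.update_self, Function.update_of_ne (hnev _ h)]
          intro he
          exact hc2 w h (he ▸ Finset.mem_insert_self x chosen)
        · rw [Function.update_of_ne (hnev _ h),
            Function.update_of_ne (hnev _ h')]
          exact hc3 w h w' h' hne
      · have hmapeq : rem.map (Function.update c v x) = rem.map c :=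
          List.map_congr_left (fun w hw => Function.update_of_ne (hnev w hw) _ _)
        have hseteq : chosen ∪ ((v :: rem).map (Function.update c v x)).toFinset
            = (insert x chosen) ∪ (rem.map c).toFinset := by
          rw [List.map_cons, hmapeq, Function.update_self]
          ext a
          simp only [List.mem_toFinset, List.toFinset_cons, Finset.mem_insert,
            Finset.mem_union, Finset.mem_insert]
          tauto
        rw [hseteq]
        exact hc4
      · intro h
        exact absurd h hcontr

end Stmt8Aux

/-- Let `B ⊆ G` be a bug with root `r`, `d_G(r) ≤ k`, and
`‖r, G − B‖ < |B| ≤ k`. If `B` has a hidden vertex, then `B` is safe in `G`. -/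
theorem stmt8 {V : Type*} [Fintype V] [DecidableEq V] (G : SimpleGraph V)
    (k : ℕ) (hk : 3 ≤ k) (L : V → Finset ℕ) (hL : ∀ v, (L v).card = k)
    (B : Finset V) (r : V) (hbug : IsBug G B r)
    (hdr : deg G r ≤ k)
    (hout : Set.ncard {u | G.Adj r u ∧ u ∉ B} < B.card)
    (hBk : B.card ≤ k)
    (hhidden : ∃ y ∈ B, ∀ u, G.Adj y u → u ∈ B) :
    SafeIn G k L Finset.univ B := by
  classical
  obtain ⟨y, hyB, hyhid⟩ := hhidden
  obtain ⟨hrB, hconn, hdegB⟩ := hbug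
  intro f hf
  obtain ⟨hf1, hf2, hf3, hf4⟩ := hf
  set W' : Finset V := Finset.univ \ B with hW'
  have hb1 : 1 ≤ B.card := Finset.card_pos.mpr ⟨r, hrB⟩
  have hn : W'.card + B.card = (Finset.univ : Finset V).card := by
    rw [hW']
    exact Finset.card_sdiff_add_card_eq_card (Finset.subset_univ B)
  have hk1 : 1 ≤ k := by omega
  have huniv1 : 1 ≤ (Finset.univ : Finset V).card := by omega
  -- external neighborhoods and available colors
  set extN : V → Finset V := fun v => W'.filter (fun u => G.Adj v u) with hextN
  set A : V → Finset ℕ := fun v => L v \ ((extN v).image f) with hA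
  have hAsub : ∀ v, A v ⊆ L v := fun v => Finset.sdiff_subset
  have hAcard : ∀ v, k ≤ (A v).card + (extN v).card := by
    intro v
    have h1 : (L v).card ≤ (A v).card + ((extN v).image f).card := by
      calc (L v).card ≤ (L v ∪ (extN v).image f).card :=
            Finset.card_le_card Finset.subset_union_left
      _ = (L v \ (extN v).image f).card + ((extN v).image f).card :=
            (Finset.card_sdiff_add_card _ _).symm
    have h2 : ((extN v).image f).card ≤ (extN v).card := Finset.card_image_le
    have := hL v; omega
  have hAext : ∀ v u, u ∉ B → G.Adj v u → ∀ x ∈ A v, x ≠ f u := by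
    intro v u huB hadj x hx he
    have hu : u ∈ extN v := by
      rw [hextN]
      simp only [Finset.mem_filter, hW', Finset.mem_sdiff, Finset.mem_univ, true_and]
      exact ⟨huB, hadj⟩
    have hmem : f u ∈ (extN v).image f := Finset.mem_image_of_mem f hu
    rw [hA] at hx
    exact (Finset.mem_sdiff.mp hx).2 (he ▸ hmem)
  -- degree conversion
  have hdegfin : ∀ v, deg G v = (Finset.univ.filter (fun u => G.Adj v u)).card := by
    intro v
    have hset : {u | G.Adj v u} = ↑(Finset.univ.filter (fun u => G.Adj v u)) := by
      ext u; simp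
    rw [deg, hset, Set.ncard_coe_finset]
  -- internal neighbors
  have hint : ∀ v ∈ B, (∃ w ∈ B, w ≠ v) → ∃ w ∈ B, G.Adj v w := by
    intro v hv hex
    obtain ⟨w₀, hw₀, hne⟩ := hex
    obtain ⟨p⟩ := hconn.preconnected ⟨v, Finset.mem_coe.mpr hv⟩ ⟨w₀, Finset.mem_coe.mpr hw₀⟩
    have hpn : ¬ p.Nil := by
      apply SimpleGraph.Walk.not_nil_of_ne
      intro h
      exact hne (congrArg Subtype.val h).symm
    have hadj := SimpleGraph.Walk.adj_snd hpn
    exact ⟨((p.getVert 1) : V), Finset.mem_coe.mp (p.getVert 1).2, hadj⟩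
  -- bound for middles
  have hmidb : ∀ v ∈ B, v ≠ r → v ≠ y → k ≤ (A v).card + 1 := by
    intro v hvB hvr hvy
    obtain ⟨w, hwB, hwadj⟩ := hint v hvB ⟨y, hyB, fun h => hvy h.symm⟩
    have hdeg2 : (Finset.univ.filter (fun u => G.Adj v u)).card ≤ 2 := by
      rw [← hdegfin]; exact hdegB v hvB hvr
    have hwext : w ∉ extN v := by
      rw [hextN]
      simp only [Finset.mem_filter, hW', Finset.mem_sdiff, Finset.mem_univ, true_and]
      intro h; exact absurd hwB h.1
    have hsub : insert w (extN v) ⊆ Finset.univ.filter (fun u => G.Adj v u) := by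
      intro u hu
      rcases Finset.mem_insert.mp hu with h | h
      · subst h; exact Finset.mem_filter.mpr ⟨Finset.mem_univ _, hwadj⟩
      · rw [hextN] at h
        exact Finset.mem_filter.mpr ⟨Finset.mem_univ _, (Finset.mem_filter.mp h).2⟩
    have hcnt : (extN v).card + 1 ≤ 2 := by
      rw [← Finset.card_insert_of_notMem hwext]
      exact le_trans (Finset.card_le_card hsub) hdeg2
    have := hAcard v; omega
  -- bound for the root
  have hrcard : (extN r).card < B.card := by
    have hre : extN r = Finset.univ.filter (fun u => G.Adj r u ∧ u ∉ B) := by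
      ext u
      rw [hextN]
      simp only [Finset.mem_filter, hW', Finset.mem_sdiff, Finset.mem_univ, true_and]
      tauto
    have hset : {u | G.Adj r u ∧ u ∉ B} = ↑(Finset.univ.filter (fun u => G.Adj r u ∧ u ∉ B)) := by
      ext u; simp
    rw [hset, Set.ncard_coe_finset] at hout
    rw [hre]; exact hout
  -- bound for the hidden vertex
  have hye : extN y = ∅ := by
    rw [hextN]
    rw [Finset.filter_eq_empty_iff]
    intro u hu hadj
    rw [hW', Finset.mem_sdiff] at hu
    exact hu.2 (hyhid u hadj)
  have hAy : k ≤ (A y).card := by have := hAcard y; rw [hye] at this; simpa using this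
  -- the processing list
  set mids : List V := ((B.erase y).erase r).toList with hmids
  set l : List V := (if r = y then ([] : List V) else [r]) ++ mids ++ [y] with hl
  have hmids_mem : ∀ v, v ∈ mids ↔ (v ≠ r ∧ v ≠ y ∧ v ∈ B) := by
    intro v
    rw [hmids, Finset.mem_toList, Finset.mem_erase, Finset.mem_erase]
  have hlmem : ∀ a, a ∈ l ↔ a ∈ B := by
    intro a
    rw [hl]
    constructor
    · intro h
      rcases List.mem_append.mp h with h | h
      · rcases List.mem_append.mp h with h | h
        · by_cases hry : r = y
          · rw [if_pos hry] at h; exact absurd h List.not_mem_nil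
          · rw [if_neg hry, List.mem_singleton] at h; subst h; exact hrB
        · exact ((hmids_mem a).mp h).2.2
      · rw [List.mem_singleton] at h; subst h; exact hyB
    · intro h
      by_cases hay : a = y
      · subst hay; exact List.mem_append.mpr (Or.inr (List.mem_singleton.mpr rfl))
      · by_cases har : a = r
        · subst har
          refine List.mem_append.mpr (Or.inl (List.mem_append.mpr (Or.inl ?_)))
          rw [if_neg (fun hh => hay hh)]
          exact List.mem_singleton.mpr rfl
        · exact List.mem_append.mpr
            (Or.inl (List.mem_append.mpr (Or.inr ((hmids_mem a).mpr ⟨har, hay, h⟩))))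
  have hltf : l.toFinset = B := by
    ext a; rw [List.mem_toFinset]; exact hlmem a
  have hmnd : mids.Nodup := by rw [hmids]; exact Finset.nodup_toList _
  have hllen : l.length = B.card := by
    rw [hl, List.length_append, List.length_append]
    have hmlen : mids.length = ((B.erase y).erase r).card := by
      rw [hmids, Finset.length_toList]
    by_cases hry : r = y
    · rw [if_pos hry]
      have he : (B.erase y).erase r = B.erase y := by rw [hry, Finset.erase_idem]
      have hc : (B.erase y).card = B.card - 1 := Finset.card_erase_of_mem hyB
      rw [hmlen, he, hc]
      simp only [List.length_nil, List.length_singleton]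
      omega
    · rw [if_neg hry]
      have h1 : r ∈ B.erase y := Finset.mem_erase.mpr ⟨hry, hrB⟩
      have hc1 : ((B.erase y).erase r).card = (B.erase y).card - 1 :=
        Finset.card_erase_of_mem h1
      have hc2 : (B.erase y).card = B.card - 1 := Finset.card_erase_of_mem hyB
      have hb2 : 2 ≤ B.card := Finset.one_lt_card.mpr ⟨r, hrB, y, hyB, hry⟩
      rw [hmlen, hc1, hc2]
      simp only [List.length_singleton]
      omega
  have hlnd : l.Nodup := by
    rw [hl]
    refine List.nodup_append.mpr ⟨List.nodup_append.mpr ⟨?_, hmnd, ?_⟩, List.nodup_singleton y, ?_⟩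
    · by_cases hry : r = y
      · rw [if_pos hry]; exact List.nodup_nil
      · rw [if_neg hry]; exact List.nodup_singleton r
    · intro a ha b hb hab; subst hab
      by_cases hry : r = y
      · rw [if_pos hry] at ha; exact List.not_mem_nil ha
      · rw [if_neg hry, List.mem_singleton] at ha
        subst ha
        exact ((hmids_mem a).mp hb).1 rfl
    · intro a ha b hb hab; subst hab
      rw [List.mem_singleton] at hb
      rcases List.mem_append.mp ha with h | h
      · by_cases hry : r = y
        · rw [if_pos hry] at h; exact List.not_mem_nil h
        · rw [if_neg hry, List.mem_singleton] at h
          rw [h] at hb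
          exact hry hb
      · exact ((hmids_mem a).mp h).2.1 hb
  -- suffix hypothesis for greedy
  have hsufmain : ∀ v l', (v :: l') <:+ l → k + 1 ≤ (A v).card + (v :: l').length := by
    intro v l' hsuf
    have hvl : v ∈ l := hsuf.subset (List.mem_cons_self)
    have hvB : v ∈ B := (hlmem v).mp hvl
    by_cases hvy : v = y
    · have hAy' : k ≤ (A v).card := by rw [hvy]; exact hAy
      simp only [List.length_cons]
      omega
    · by_cases hvr : v = r
      · have hry : ¬ r = y := fun h => hvy (hvr.trans h)
        have hl2 : l = r :: (mids ++ [y]) := by rw [hl, if_neg hry]; rfl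
        have hrnm : r ∉ mids ++ [y] := by
          intro h
          rcases List.mem_append.mp h with h | h
          · exact ((hmids_mem r).mp h).1 rfl
          · rw [List.mem_singleton] at h; exact hry h
        rw [hl2] at hsuf
        rcases List.suffix_cons_iff.mp hsuf with h | h
        · have hlen2 : (v :: l').length = l.length := by rw [h, hl2]
          rw [hllen] at hlen2
          have h1 := hAcard v
          have h2 : (extN v).card < B.card := by rw [hvr]; exact hrcard
          simp only [List.length_cons] at hlen2 ⊢
          omega
        · have hm : v ∈ mids ++ [y] := h.subset (List.mem_cons_self)
          rw [hvr] at hm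
          exact absurd hm hrnm
      · have hl'ne : l' ≠ [] := by
          intro hnil
          subst hnil
          obtain ⟨pre, hpre⟩ := hsuf
          have h1 : l.getLast? = some y := by rw [hl]; exact List.getLast?_concat
          have h2 : l.getLast? = some v := by rw [← hpre]; exact List.getLast?_concat
          rw [h1] at h2
          exact hvy (Option.some.inj h2).symm
        have hAm := hmidb v hvB hvr hvy
        have hlp : 1 ≤ l'.length := List.length_pos_iff.mpr hl'ne
        simp only [List.length_cons]
        omega
  -- the full-class data
  set m' : ℕ := (W'.card + k - 1) / k with hm'
  set F : Finset ℕ :=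
    (W'.image f).filter (fun c => (W'.filter fun v => f v = c).card = m') with hFdef
  obtain ⟨hNum1, hNum2, hNum3⟩ := stmt8aux_num_main k B.card W'.card hk1 hb1 hBk
  rw [hn] at hNum1 hNum2 hNum3
  have ht : 1 ≤ modStar (Finset.univ : Finset V).card k := stmt8aux_modStar_pos _ _ hk1
  have hφ : F.card + B.card ≤ k + modStar (Finset.univ : Finset V).card k := by
    have h1 : F.card ≤ modStar W'.card k := hf4
    omega
  obtain ⟨c, hc1, hc2, hc3, hc4, hc5⟩ :=
    stmt8aux_greedy k (modStar (Finset.univ : Finset V).card k) B.card A F ht hφ hBk l ∅ hlnd hsufmain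
      (by simpa using hllen) (by simp) (by simp)
  have hcB1 : ∀ v ∈ B, c v ∈ A v := fun v hv => hc1 v (by rw [← List.mem_toFinset, hltf]; exact hv)
  have hcB3 : ∀ v ∈ B, ∀ w ∈ B, v ≠ w → c v ≠ c w := fun v hv w hw =>
    hc3 v (by rw [← List.mem_toFinset, hltf]; exact hv) w (by rw [← List.mem_toFinset, hltf]; exact hw)
  have hc4' : ((B.image c) ∩ F).card ≤ modStar (Finset.univ : Finset V).card k := by
    have hmapB : (l.map c).toFinset = B.image c := by
      ext a
      simp only [List.mem_toFinset, List.mem_map, Finset.mem_image]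
      constructor
      · rintro ⟨v, hv, he⟩; exact ⟨v, (hlmem v).mp hv, he⟩
      · rintro ⟨v, hv, he⟩; exact ⟨v, (hlmem v).mpr hv, he⟩
    rw [← hmapB]
    simpa using hc4
  have hc5' : F.card + B.card ≤ k → ∀ v ∈ B, c v ∉ F := fun h v hv =>
    hc5 h v (by rw [← List.mem_toFinset, hltf]; exact hv)
  -- the extension
  set g : V → ℕ := fun v => if v ∈ B then c v else f v with hg
  have hgB : ∀ v ∈ B, g v = c v := fun v hv => by rw [hg]; exact if_pos hv
  have hgW : ∀ v, v ∉ B → g v = f v := fun v hv => by rw [hg]; exact if_neg hv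
  -- shared counting facts
  have hsplit : ∀ c₀ : ℕ, Finset.univ.filter (fun v => g v = c₀)
      = (W'.filter fun v => f v = c₀) ∪ (B.filter fun v => c v = c₀) := by
    intro c₀
    ext u
    constructor
    · intro hu
      have hgu := (Finset.mem_filter.mp hu).2
      by_cases h : u ∈ B
      · rw [hgB u h] at hgu
        exact Finset.mem_union_right _ (Finset.mem_filter.mpr ⟨h, hgu⟩)
      · rw [hgW u h] at hgu
        refine Finset.mem_union_left _ (Finset.mem_filter.mpr ⟨?_, hgu⟩)
        rw [hW']
        exact Finset.mem_sdiff.mpr ⟨Finset.mem_univ _, h⟩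
    · intro hu
      refine Finset.mem_filter.mpr ⟨Finset.mem_univ _, ?_⟩
      rcases Finset.mem_union.mp hu with h | h
      · obtain ⟨hw, hfu⟩ := Finset.mem_filter.mp h
        have hnB : u ∉ B := by rw [hW'] at hw; exact (Finset.mem_sdiff.mp hw).2
        rw [hgW u hnB]; exact hfu
      · obtain ⟨hB, hcu⟩ := Finset.mem_filter.mp h
        rw [hgB u hB]; exact hcu
  have hdisj : ∀ c₀ : ℕ,
      Disjoint (W'.filter fun v => f v = c₀) (B.filter fun v => c v = c₀) := by
    intro c₀
    refine Finset.disjoint_left.mpr ?_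
    intro a ha hb
    have h1 := (Finset.mem_filter.mp ha).1
    rw [hW'] at h1
    exact (Finset.mem_sdiff.mp h1).2 (Finset.mem_filter.mp hb).1
  have hcards : ∀ c₀ : ℕ, (Finset.univ.filter (fun v => g v = c₀)).card
      = (W'.filter fun v => f v = c₀).card + (B.filter fun v => c v = c₀).card := by
    intro c₀
    rw [hsplit c₀, Finset.card_union_of_disjoint (hdisj c₀)]
  have hBle1 : ∀ c₀ : ℕ, (B.filter fun v => c v = c₀).card ≤ 1 := by
    intro c₀
    refine Finset.card_le_one.mpr ?_
    intro a ha b hb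
    by_contra hne
    exact hcB3 a (Finset.mem_filter.mp ha).1 b (Finset.mem_filter.mp hb).1 hne
      (((Finset.mem_filter.mp ha).2).trans ((Finset.mem_filter.mp hb).2).symm)
  have hm1 : 1 ≤ ((Finset.univ : Finset V).card + k - 1) / k :=
    (Nat.one_le_div_iff (by omega)).mpr (by omega)
  have hmm' : (W'.card + k - 1) / k ≤ ((Finset.univ : Finset V).card + k - 1) / k :=
    Nat.div_le_div_right (by omega)
  have hm'eq : m' = (W'.card + k - 1) / k := hm'
  refine ⟨g, fun v hv => hgW v (Finset.mem_sdiff.mp hv).2, ?_, ?_, ?_, ?_⟩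
  · -- lists
    intro v _
    by_cases hv : v ∈ B
    · rw [hgB v hv]; exact hAsub v (hcB1 v hv)
    · rw [hgW v hv]
      exact hf1 v (by rw [hW']; exact Finset.mem_sdiff.mpr ⟨Finset.mem_univ _, hv⟩)
  · -- proper
    intro u _ v _ hadj
    by_cases hu : u ∈ B <;> by_cases hv : v ∈ B
    · rw [hgB u hu, hgB v hv]
      exact hcB3 u hu v hv (G.ne_of_adj hadj)
    · rw [hgB u hu, hgW v hv]
      exact hAext u v hv hadj (c u) (hcB1 u hu)
    · rw [hgW u hu, hgB v hv]
      exact fun h => hAext v u hu hadj.symm (c v) (hcB1 v hv) h.symm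
    · rw [hgW u hu, hgW v hv]
      exact hf2 u (Finset.mem_sdiff.mpr ⟨Finset.mem_univ _, hu⟩)
        v (Finset.mem_sdiff.mpr ⟨Finset.mem_univ _, hv⟩) hadj
  · -- sizes
    intro c₀
    rw [hcards c₀]
    rcases Nat.eq_zero_or_pos ((B.filter fun v => c v = c₀).card) with h0 | hpos
    · have h2 := hf3 c₀
      omega
    · have h1 : (B.filter fun v => c v = c₀).card = 1 := le_antisymm (hBle1 c₀) hpos
      obtain ⟨v₀, hv₀⟩ := Finset.card_pos.mp hpos
      have hv₀B := (Finset.mem_filter.mp hv₀).1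
      have hv₀c := (Finset.mem_filter.mp hv₀).2
      rcases Nat.lt_or_ge ((W'.card + k - 1) / k) (((Finset.univ : Finset V).card + k - 1) / k)
        with hlt | hge
      · have h2 := hf3 c₀
        omega
      · have hmeq : ((Finset.univ : Finset V).card + k - 1) / k = (W'.card + k - 1) / k :=
          le_antisymm hge hmm'
        have hφk : F.card + B.card ≤ k := by
          have h2 := hNum2 hmeq
          have h3 : modStar (Finset.univ : Finset V).card k ≤ k := stmt8aux_modStar_le _ _ hk1
          have h4 : F.card ≤ modStar W'.card k := hf4
          omega
        have hnotF : c₀ ∉ F := by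
          have h5 := hc5' hφk v₀ hv₀B
          rw [hv₀c] at h5; exact h5
        rcases Nat.eq_zero_or_pos ((W'.filter fun v => f v = c₀).card) with hz | hp
        · omega
        · have hc₀img : c₀ ∈ W'.image f := by
            obtain ⟨w, hw⟩ := Finset.card_pos.mp hp
            exact Finset.mem_image.mpr ⟨w, (Finset.mem_filter.mp hw).1, (Finset.mem_filter.mp hw).2⟩
          have hneq : (W'.filter fun v => f v = c₀).card ≠ m' := by
            intro he
            exact hnotF (by rw [hFdef]; exact Finset.mem_filter.mpr ⟨hc₀img, he⟩)
          have h5 := hf3 c₀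
          omega
  · -- full classes
    have hcase : (((Finset.univ : Finset V).card + k - 1) / k = (W'.card + k - 1) / k) ∨
        (((Finset.univ : Finset V).card + k - 1) / k = (W'.card + k - 1) / k + 1) := by
      omega
    rcases hcase with hmeq | hmsucc
    · -- m = m'
      have hsubF : (Finset.univ.image g).filter
          (fun c₀ => (Finset.univ.filter fun v => g v = c₀).card
              = ((Finset.univ : Finset V).card + k - 1) / k) ⊆ F ∪ B.image c := by
        intro c₀ hc₀
        have hc₀full := (Finset.mem_filter.mp hc₀).2
        rcases Nat.eq_zero_or_pos ((B.filter fun v => c v = c₀).card) with h0 | hpos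
        · have hcc := hcards c₀
          have hclass : (W'.filter fun v => f v = c₀).card = m' := by omega
          have hp : 0 < (W'.filter fun v => f v = c₀).card := by omega
          obtain ⟨w, hw⟩ := Finset.card_pos.mp hp
          have hc₀img' : c₀ ∈ W'.image f :=
            Finset.mem_image.mpr ⟨w, (Finset.mem_filter.mp hw).1, (Finset.mem_filter.mp hw).2⟩
          refine Finset.mem_union_left _ ?_
          rw [hFdef]
          exact Finset.mem_filter.mpr ⟨hc₀img', hclass⟩
        · obtain ⟨v₀, hv₀⟩ := Finset.card_pos.mp hpos
          exact Finset.mem_union_right _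
            (Finset.mem_image.mpr ⟨v₀, (Finset.mem_filter.mp hv₀).1, (Finset.mem_filter.mp hv₀).2⟩)
      have h1 := Finset.card_le_card hsubF
      have h2 := Finset.card_union_le F (B.image c)
      have h3 : (B.image c).card ≤ B.card := Finset.card_image_le
      have h4 := hNum2 hmeq
      have h5 : F.card ≤ modStar W'.card k := hf4
      omega
    · -- m = m' + 1
      rcases Nat.eq_zero_or_pos W'.card with hW0 | hW0
      · have hbt : modStar (Finset.univ : Finset V).card k = B.card := by
          have he : (Finset.univ : Finset V).card = B.card := by omega
          rw [he]
          exact stmt8aux_modStar_self _ _ hb1 hBk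
        have h1 := Finset.card_le_card (Finset.filter_subset
          (fun c₀ => (Finset.univ.filter fun v => g v = c₀).card
            = ((Finset.univ : Finset V).card + k - 1) / k) (Finset.univ.image g))
        have h2 : (Finset.univ.image g).card ≤ (Finset.univ : Finset V).card :=
          Finset.card_image_le
        omega
      · have hm'1 : 1 ≤ (W'.card + k - 1) / k :=
          (Nat.one_le_div_iff (by omega)).mpr (by omega)
        have hsubF : (Finset.univ.image g).filter
            (fun c₀ => (Finset.univ.filter fun v => g v = c₀).card
                = ((Finset.univ : Finset V).card + k - 1) / k) ⊆ (B.image c) ∩ F := by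
          intro c₀ hc₀
          have hc₀full := (Finset.mem_filter.mp hc₀).2
          have hcc := hcards c₀
          have hf3' := hf3 c₀
          have hBl := hBle1 c₀
          have hpos : 0 < (B.filter fun v => c v = c₀).card := by omega
          have hb1' : (B.filter fun v => c v = c₀).card = 1 := le_antisymm hBl hpos
          have hclass : (W'.filter fun v => f v = c₀).card = m' := by omega
          have hp : 0 < (W'.filter fun v => f v = c₀).card := by omega
          obtain ⟨w, hw⟩ := Finset.card_pos.mp hp
          have hc₀img' : c₀ ∈ W'.image f :=
            Finset.mem_image.mpr ⟨w, (Finset.mem_filter.mp hw).1, (Finset.mem_filter.mp hw).2⟩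
          obtain ⟨v₀, hv₀⟩ := Finset.card_pos.mp hpos
          refine Finset.mem_inter.mpr ⟨Finset.mem_image.mpr
            ⟨v₀, (Finset.mem_filter.mp hv₀).1, (Finset.mem_filter.mp hv₀).2⟩, ?_⟩
          rw [hFdef]
          exact Finset.mem_filter.mpr ⟨hc₀img', hclass⟩
        exact (Finset.card_le_card hsubF).trans hc4'
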